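/- Let a ≤ b ≤ c be real numbers, s = a + b + c, and λ_± = s/3 ± (√2/3)·√(3(a²+b²+c²) − s²). Then λ_− ≤ a ≤ b ≤ c ≤ λ_+. -/
import Mathlib

theorem stmt3 (a b c : ℝ) (hab : a ≤ b) (hbc : b ≤ c) :
    (a + b + c) / 3 - Real.sqrt 2 / 3 * Real.sqrt (3 * (a^2 + b^2 + c^2) - (a + b + c)^2)
      ≤ a ∧ a ≤ b ∧ b ≤ c ∧
    c ≤ (a + b + c) / 3 + Real.sqrt 2 / 3 * Real.sqrt (3 * (a^2 + b^2 + c^2) - (a + b + c)^2) := by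
  set Q : ℝ := 3 * (a^2 + b^2 + c^2) - (a + b + c)^2 with hQ
  have hQ0 : 0 ≤ Q := by nlinarith [sq_nonneg (a-b), sq_nonneg (b-c), sq_nonneg (a-c)]
  have hmul : Real.sqrt 2 * Real.sqrt Q = Real.sqrt (2 * Q) := by
    rw [← Real.sqrt_mul (by norm_num)]
  have h1 : a + b + c - 3 * a ≤ Real.sqrt (2 * Q) := by
    rw [Real.le_sqrt (by linarith) (by linarith)]
    nlinarith [sq_nonneg (b - c)]
  have h2 : 3 * c - (a + b + c) ≤ Real.sqrt (2 * Q) := by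
    rw [Real.le_sqrt (by linarith) (by linarith)]
    nlinarith [sq_nonneg (a - b)]
  refine ⟨?_, hab, hbc, ?_⟩ <;> rw [div_mul_eq_mul_div, hmul] <;> linarith
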